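/- Let m ≥ 3 and let X_1, …, X_n be i.i.d. random vectors in ℝ^m with common density f_m. Set ω_n = n − ⌈(1/4) n^{1−2/m}⌉. Then for all sufficiently large n, P( d_{ω_n}(X_1, …, X_n) > 1 ) ≥ 1/4; in particular d_{ω_n} does not converge to 0 in probability, so d_{ω_n} is not an admissible bandwidth. -/

import Mathlib

open MeasureTheory ProbabilityTheory Filter Metric Topology ENNReal

/-- The heavy-tailed density `f_m(x) = c / (1 + ‖x‖^{m+1})` on `ℝ^m` (with `c` the
normalizing constant). -/
noncomputable def heavyDensity (m : ℕ) (c : ℝ) (x : EuclideanSpace ℝ (Fin m)) : ℝ :=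
  c / (1 + ‖x‖ ^ (m + 1))

/-- The measure on `ℝ^m` with density `f_m` with respect to Lebesgue measure. -/
noncomputable def heavyMeasure (m : ℕ) (c : ℝ) : Measure (EuclideanSpace ℝ (Fin m)) :=
  volume.withDensity fun x => ENNReal.ofReal (heavyDensity m c x)

/-- The graph on `{1, …, n}` with an edge between distinct `i, j` whenever
`‖x i − x j‖ ≤ r`. -/
def ripsGraph {n m : ℕ} (x : Fin n → EuclideanSpace ℝ (Fin m)) (r : ℝ) :
    SimpleGraph (Fin n) where
  Adj i j := i ≠ j ∧ dist (x i) (x j) ≤ r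
  symm := ⟨fun i j h => ⟨h.1.symm, by rw [dist_comm]; exact h.2⟩⟩
  loopless := ⟨fun i h => h.1 rfl⟩

/-- The `k`-th Rips death diameter of the point cloud `x`. -/
noncomputable def ripsDeath {n m : ℕ} (x : Fin n → EuclideanSpace ℝ (Fin m)) (k : ℕ) : ℝ :=
  sInf {r : ℝ | 0 ≤ r ∧ Nat.card (ripsGraph x r).ConnectedComponent ≤ n - k}

/-! ### Auxiliary graph lemmas -/

lemma reachable_eq_of_isolated {V : Type*} {G : SimpleGraph V} {i j : V}
    (hiso : ∀ j, ¬ G.Adj i j) (h : G.Reachable i j) : i = j := by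
  obtain ⟨w⟩ := h
  cases w with
  | nil => rfl
  | cons h p => exact absurd h (hiso _)

lemma isolated_card_le {n m : ℕ} (x : Fin n → EuclideanSpace ℝ (Fin m)) (r : ℝ)
    (I : Finset (Fin n)) (hI : ∀ i ∈ I, ∀ j, j ≠ i → r < dist (x i) (x j)) :
    I.card ≤ Nat.card (ripsGraph x r).ConnectedComponent := by
  have hfin : Finite (ripsGraph x r).ConnectedComponent := Quot.finite _
  have hinj : Function.Injective
      (fun i : I => (ripsGraph x r).connectedComponentMk (i : Fin n)) := by
    rintro ⟨i, hi⟩ ⟨j, hj⟩ hij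
    have hreach : (ripsGraph x r).Reachable i j :=
      SimpleGraph.ConnectedComponent.exact hij
    have hiso : ∀ j, ¬ (ripsGraph x r).Adj i j := by
      rintro j ⟨hne, hle⟩
      exact absurd hle (not_le.2 (hI i hi j (Ne.symm hne)))
    exact Subtype.ext (reachable_eq_of_isolated hiso hreach)
  calc I.card = Nat.card I := by simp [Nat.card_eq_fintype_card]
    _ ≤ _ := Nat.card_le_card_of_injective _ hinj

lemma card_cc_le_one {n m : ℕ} (x : Fin n → EuclideanSpace ℝ (Fin m)) {r : ℝ}
    (hr : ∀ i j : Fin n, dist (x i) (x j) ≤ r) :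
    Nat.card (ripsGraph x r).ConnectedComponent ≤ 1 := by
  have hsub : Subsingleton (ripsGraph x r).ConnectedComponent := by
    constructor
    intro a b
    induction a using SimpleGraph.ConnectedComponent.ind with | _ u =>
    induction b using SimpleGraph.ConnectedComponent.ind with | _ v =>
    apply SimpleGraph.ConnectedComponent.sound
    by_cases huv : u = v
    · exact huv ▸ SimpleGraph.Reachable.refl _
    · exact SimpleGraph.Adj.reachable ⟨huv, hr u v⟩
  rcases isEmpty_or_nonempty (ripsGraph x r).ConnectedComponent with h | h
  · simp [Nat.card_of_isEmpty]
  · haveI : Unique (ripsGraph x r).ConnectedComponent := uniqueOfSubsingleton h.some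
    simp [Nat.card_unique]

lemma one_lt_ripsDeath {n m : ℕ} (x : Fin n → EuclideanSpace ℝ (Fin m)) {k : ℕ}
    (hk1 : 1 ≤ k) (hkn : k ≤ n) (I : Finset (Fin n)) (hcard : k < I.card)
    (hiso : ∀ i ∈ I, ∀ j, j ≠ i → 2 ≤ dist (x i) (x j)) :
    1 < ripsDeath x (n - k) := by
  have hsub : n - (n - k) = k := Nat.sub_sub_self hkn
  have hlb : ∀ r ∈ {r : ℝ | 0 ≤ r ∧
      Nat.card (ripsGraph x r).ConnectedComponent ≤ n - (n - k)}, (3/2 : ℝ) ≤ r := by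
    rintro r ⟨hr0, hrcard⟩
    by_contra hlt
    push_neg at hlt
    have : I.card ≤ Nat.card (ripsGraph x r).ConnectedComponent := by
      apply isolated_card_le
      intro i hi j hj
      calc r < 3/2 := hlt
        _ < 2 := by norm_num
        _ ≤ dist (x i) (x j) := hiso i hi j hj
    omega
  have hne : {r : ℝ | 0 ≤ r ∧
      Nat.card (ripsGraph x r).ConnectedComponent ≤ n - (n - k)}.Nonempty := by
    obtain ⟨R, hR⟩ := Set.Finite.bddAbove
      (Set.finite_range fun p : Fin n × Fin n => dist (x p.1) (x p.2))
    refine ⟨max R 0, le_max_right _ _, ?_⟩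
    rw [hsub]
    refine le_trans (card_cc_le_one x fun i j => ?_) hk1
    exact le_max_of_le_left (hR (Set.mem_range_self (i, j)))
  have : (3/2 : ℝ) ≤ ripsDeath x (n - k) := le_csInf hne hlb
  linarith

/-! ### Auxiliary measure lemmas -/

section Heavy
variable {m : ℕ} {c : ℝ}

lemma one_lt_two_pow' (hm : 1 ≤ m) : (1 : ℝ) < 2 ^ m := by
  calc (1:ℝ) < 2 := one_lt_two
  _ = 2^1 := (pow_one 2).symm
  _ ≤ 2 ^ m := pow_le_pow_right₀ one_le_two hm

/-- the unit-ball volume, as a real number -/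
noncomputable def ubvol (m : ℕ) : ℝ := (volume (ball (0 : EuclideanSpace ℝ (Fin m)) 1)).toReal

lemma ubvol_pos (hm : 1 ≤ m) : 0 < ubvol m := by
  have h1 : volume (ball (0 : EuclideanSpace ℝ (Fin m)) 1) ≠ 0 :=
    (measure_ball_pos _ _ one_pos).ne'
  have h2 : volume (ball (0 : EuclideanSpace ℝ (Fin m)) 1) ≠ ⊤ :=
    measure_ball_lt_top.ne
  exact ENNReal.toReal_pos h1 h2

lemma ubvol_eq (m : ℕ) :
    volume (ball (0 : EuclideanSpace ℝ (Fin m)) 1) = ENNReal.ofReal (ubvol m) := by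
  rw [ubvol, ENNReal.ofReal_toReal measure_ball_lt_top.ne]

lemma euclidean_ball_vol (hm : 1 ≤ m) (x : EuclideanSpace ℝ (Fin m)) {r : ℝ} (hr : 0 ≤ r) :
    volume (ball x r) = ENNReal.ofReal (r ^ m * ubvol m) := by
  haveI : Nontrivial (EuclideanSpace ℝ (Fin m)) := by
    apply Module.nontrivial_of_finrank_pos (R := ℝ)
    rw [finrank_euclideanSpace_fin]; omega
  rw [Measure.addHaar_ball volume x hr, finrank_euclideanSpace_fin, ubvol_eq m,
    ← ENNReal.ofReal_mul (by positivity)]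

lemma euclidean_closedBall_vol (hm : 1 ≤ m) (x : EuclideanSpace ℝ (Fin m)) {r : ℝ} (hr : 0 ≤ r) :
    volume (closedBall x r) = ENNReal.ofReal (r ^ m * ubvol m) := by
  haveI : Nontrivial (EuclideanSpace ℝ (Fin m)) := by
    apply Module.nontrivial_of_finrank_pos (R := ℝ)
    rw [finrank_euclideanSpace_fin]; omega
  rw [Measure.addHaar_closedBall_eq_addHaar_ball]
  exact euclidean_ball_vol hm x hr

/-- tail constant -/
noncomputable def tailC (m : ℕ) (c : ℝ) : ℝ := c * (2 ^ m - 1) * ubvol m / 2 ^ (m + 2)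

/-- ball constant -/
noncomputable def ballC (m : ℕ) (c : ℝ) : ℝ := c * 2 ^ m * ubvol m

lemma tailC_pos (hm : 1 ≤ m) (hc : 0 < c) : 0 < tailC m c := by
  have h1 := one_lt_two_pow' (m := m) hm
  have h2 := ubvol_pos (m := m) hm
  rw [tailC]
  have h3 : (0:ℝ) < 2 ^ (m+2) := by positivity
  apply div_pos _ h3
  have : (0:ℝ) < 2 ^ m - 1 := by linarith
  positivity

lemma ballC_pos (hm : 1 ≤ m) (hc : 0 < c) : 0 < ballC m c := by
  have h2 := ubvol_pos (m := m) hm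
  rw [ballC]; positivity

lemma heavy_tail_lb (hm : 1 ≤ m) (hc : 0 < c) {t : ℝ} (ht : 1 ≤ t) :
    ENNReal.ofReal (tailC m c / t) ≤
      heavyMeasure m c {x : EuclideanSpace ℝ (Fin m) | t < ‖x‖} := by
  have ht0 : 0 < t := lt_of_lt_of_le one_pos ht
  set A : Set (EuclideanSpace ℝ (Fin m)) :=
    ball (0 : EuclideanSpace ℝ (Fin m)) (2*t) \ closedBall 0 t with hA
  have hmeasA : MeasurableSet A := measurableSet_ball.diff measurableSet_closedBall
  have hAS : A ⊆ {x | t < ‖x‖} := by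
    rintro x ⟨_, hx2⟩
    simpa [mem_closedBall, dist_zero_right, not_le] using hx2
  have hSmeas : MeasurableSet {x : EuclideanSpace ℝ (Fin m) | t < ‖x‖} := by
    have : Continuous fun x : EuclideanSpace ℝ (Fin m) => ‖x‖ := continuous_norm
    exact measurableSet_lt measurable_const this.measurable
  have hvolA : volume A = ENNReal.ofReal (((2*t)^m - t^m) * ubvol m) := by
    rw [hA, measure_diff (closedBall_subset_ball (by linarith))
      measurableSet_closedBall.nullMeasurableSet
      (by rw [euclidean_closedBall_vol hm _ ht0.le]; exact ENNReal.ofReal_ne_top),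
      euclidean_ball_vol hm _ (by linarith), euclidean_closedBall_vol hm _ ht0.le,
      ← ENNReal.ofReal_sub _ (show (0:ℝ) ≤ t^m * ubvol m from
        mul_nonneg (pow_nonneg ht0.le m) ENNReal.toReal_nonneg)]
    congr 1
    ring
  have hpt : ∀ x ∈ A, ENNReal.ofReal (c / (2^(m+2) * t^(m+1))) ≤
      ENNReal.ofReal (heavyDensity m c x) := by
    intro x hx
    apply ENNReal.ofReal_le_ofReal
    have hx1 : ‖x‖ < 2*t := by simpa [mem_ball, dist_zero_right] using hx.1
    have hxn : 0 ≤ ‖x‖ := norm_nonneg x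
    rw [heavyDensity]
    have hd1 : (0:ℝ) < 1 + ‖x‖^(m+1) := by positivity
    have hd2 : 1 + ‖x‖^(m+1) ≤ 2^(m+2) * t^(m+1) := by
      have h1 : ‖x‖^(m+1) ≤ (2*t)^(m+1) := pow_le_pow_left₀ hxn (by linarith) _
      have h2 : (1:ℝ) ≤ (2*t)^(m+1) := one_le_pow₀ (by linarith)
      have : (2:ℝ)^(m+2) * t^(m+1) = 2 * ((2*t)^(m+1)) := by ring
      rw [this]; linarith
    exact div_le_div_of_nonneg_left hc.le hd1 hd2
  calc ENNReal.ofReal (tailC m c / t)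
      = ENNReal.ofReal (c / (2^(m+2) * t^(m+1)) * (((2*t)^m - t^m) * ubvol m)) := by
        congr 1
        rw [tailC]
        field_simp
        ring
    _ = ENNReal.ofReal (c / (2^(m+2) * t^(m+1))) * volume A := by
        rw [hvolA, ← ENNReal.ofReal_mul (by positivity)]
    _ = ∫⁻ _ in A, ENNReal.ofReal (c / (2^(m+2) * t^(m+1))) ∂volume := by
        rw [setLIntegral_const, mul_comm]
    _ ≤ ∫⁻ x in A, ENNReal.ofReal (heavyDensity m c x) ∂volume :=
        setLIntegral_mono' hmeasA hpt
    _ ≤ ∫⁻ x in {x | t < ‖x‖}, ENNReal.ofReal (heavyDensity m c x) ∂volume :=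
        lintegral_mono_set hAS
    _ = heavyMeasure m c {x | t < ‖x‖} := by
        rw [heavyMeasure, withDensity_apply _ hSmeas]

lemma heavy_ball_ub (hm : 1 ≤ m) (hc : 0 < c) {t : ℝ} (ht : 3 ≤ t)
    {x : EuclideanSpace ℝ (Fin m)} (hx : t < ‖x‖) :
    heavyMeasure m c (closedBall x 2) ≤ ENNReal.ofReal (ballC m c / (t-2)^(m+1)) := by
  have ht2 : (1:ℝ) ≤ t - 2 := by linarith
  have hpt : ∀ y ∈ closedBall x 2, ENNReal.ofReal (heavyDensity m c y) ≤
      ENNReal.ofReal (c / (t-2)^(m+1)) := by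
    intro y hy
    apply ENNReal.ofReal_le_ofReal
    rw [heavyDensity]
    have hyn : t - 2 ≤ ‖y‖ := by
      have := norm_sub_norm_le x y
      have hd : dist x y ≤ 2 := mem_closedBall'.mp hy
      rw [dist_eq_norm] at hd
      linarith
    have h1 : (t-2)^(m+1) ≤ 1 + ‖y‖^(m+1) := by
      have := pow_le_pow_left₀ (by linarith : (0:ℝ) ≤ t - 2) hyn (m+1)
      linarith
    exact div_le_div_of_nonneg_left hc.le (by positivity) h1
  calc heavyMeasure m c (closedBall x 2)
      = ∫⁻ y in closedBall x 2, ENNReal.ofReal (heavyDensity m c y) ∂volume := by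
        rw [heavyMeasure, withDensity_apply _ measurableSet_closedBall]
    _ ≤ ∫⁻ _ in closedBall x 2, ENNReal.ofReal (c / (t-2)^(m+1)) ∂volume :=
        setLIntegral_mono' measurableSet_closedBall hpt
    _ = ENNReal.ofReal (c / (t-2)^(m+1)) * volume (closedBall x 2) := setLIntegral_const _ _
    _ = ENNReal.ofReal (ballC m c / (t-2)^(m+1)) := by
        rw [euclidean_closedBall_vol hm _ (by norm_num : (0:ℝ) ≤ 2),
          ← ENNReal.ofReal_mul (by positivity)]
        congr 1
        rw [ballC]
        field_simp

lemma pairSet_meas (m : ℕ) (t : ℝ) :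
    MeasurableSet {p : EuclideanSpace ℝ (Fin m) × EuclideanSpace ℝ (Fin m) |
      t < ‖p.1‖ ∧ dist p.1 p.2 ≤ 2} := by
  apply MeasurableSet.inter
  · exact measurableSet_lt measurable_const (continuous_norm.comp continuous_fst).measurable
  · exact measurableSet_le (continuous_fst.dist continuous_snd).measurable measurable_const

lemma heavy_pair_ub (hm : 1 ≤ m) (hc : 0 < c)
    (hprob : IsProbabilityMeasure (heavyMeasure m c)) {t : ℝ} (ht : 3 ≤ t) :
    ((heavyMeasure m c).prod (heavyMeasure m c))
      {p : EuclideanSpace ℝ (Fin m) × EuclideanSpace ℝ (Fin m) | t < ‖p.1‖ ∧ dist p.1 p.2 ≤ 2}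
      ≤ ENNReal.ofReal (ballC m c / (t-2)^(m+1)) := by
  set μ := heavyMeasure m c
  rw [Measure.prod_apply (pairSet_meas m t)]
  calc ∫⁻ x, μ (Prod.mk x ⁻¹' _) ∂μ
      ≤ ∫⁻ _, ENNReal.ofReal (ballC m c / (t-2)^(m+1)) ∂μ := by
        apply lintegral_mono
        intro x
        by_cases hx : t < ‖x‖
        · refine le_trans (measure_mono ?_) (heavy_ball_ub hm hc ht hx)
          intro y hy
          exact mem_closedBall'.mpr hy.2
        · have : (Prod.mk x ⁻¹' {p : EuclideanSpace ℝ (Fin m) × EuclideanSpace ℝ (Fin m) |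
              t < ‖p.1‖ ∧ dist p.1 p.2 ≤ 2}) = ∅ := by
            ext y; simp [hx]
          simp [this]
    _ = ENNReal.ofReal (ballC m c / (t-2)^(m+1)) := by
        rw [lintegral_const, measure_univ, mul_one]

end Heavy

/-! ### Chebyshev counting lemma -/

lemma count_tail {Ω : Type*} [MeasureSpace Ω] [IsProbabilityMeasure (ℙ : Measure Ω)]
    {n : ℕ} (Y : Fin n → Ω → ℝ)
    (hmeasY : ∀ i, Measurable (Y i))
    (hind : Set.Pairwise ↑(Finset.univ : Finset (Fin n)) fun i j => IndepFun (Y i) (Y j) ℙ)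
    (h01 : ∀ i ω, Y i ω = 0 ∨ Y i ω = 1)
    {p : ℝ} (hp : ∀ i, ∫ ω, Y i ω ∂ℙ = p)
    {k : ℝ} (hk : k ≤ n * p / 2) (hnp : 0 < n * p) :
    ℙ {ω | ∑ i, Y i ω ≤ k} ≤ ENNReal.ofReal (4 / (n * p)) := by
  have hY2 : ∀ i, MemLp (Y i) 2 ℙ := fun i =>
    MemLp.of_bound (hmeasY i).aestronglyMeasurable 1
      (ae_of_all _ fun ω => by rcases h01 i ω with h | h <;> simp [h])
  have hS2 : MemLp (∑ i, Y i) 2 ℙ := memLp_finset_sum' _ fun i _ => hY2 i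
  have hsa : ∀ ω, (∑ i, Y i) ω = ∑ i, Y i ω := fun ω => Finset.sum_apply ω Finset.univ Y
  have hES : ℙ[∑ i, Y i] = n * p := by
    have : ∫ ω, (∑ i, Y i) ω ∂ℙ = ∑ i : Fin n, ∫ ω, Y i ω ∂ℙ := by
      simp_rw [hsa]
      exact integral_finset_sum _ fun i _ => (hY2 i).integrable one_le_two
    rw [this]
    simp [hp, Finset.sum_const, mul_comm]
  have hVar : variance (∑ i, Y i) ℙ ≤ n * p := by
    rw [IndepFun.variance_sum (fun i _ => hY2 i) hind]
    have hvi : ∀ i, variance (Y i) ℙ ≤ p := by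
      intro i
      refine le_trans (variance_le_expectation_sq (hY2 i).aestronglyMeasurable) ?_
      have hsq : (Y i) ^ 2 = Y i := by
        funext ω
        rcases h01 i ω with h | h <;> simp [h]
      rw [hsq, hp i]
    calc ∑ i : Fin n, variance (Y i) ℙ ≤ ∑ _i : Fin n, p := Finset.sum_le_sum fun i _ => hvi i
      _ = n * p := by simp [mul_comm]
  set cc : ℝ := n * p - k with hcc
  have hccpos : 0 < cc := by rw [hcc]; linarith
  have hsubset : {ω | ∑ i, Y i ω ≤ k} ⊆ {ω | cc ≤ |(∑ i, Y i) ω - ℙ[∑ i, Y i]|} := by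
    intro ω hω
    simp only [Set.mem_setOf_eq] at hω ⊢
    rw [hES, hsa ω, abs_sub_comm]
    calc cc ≤ n * p - ∑ i, Y i ω := by rw [hcc]; linarith
      _ ≤ |n * p - ∑ i, Y i ω| := le_abs_self _
  calc ℙ {ω | ∑ i, Y i ω ≤ k} ≤ ℙ {ω | cc ≤ |(∑ i, Y i) ω - ℙ[∑ i, Y i]|} :=
        measure_mono hsubset
    _ ≤ ENNReal.ofReal (variance (∑ i, Y i) ℙ / cc ^ 2) :=
        meas_ge_le_variance_div_sq hS2 hccpos
    _ ≤ ENNReal.ofReal (4 / (n * p)) := by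
        apply ENNReal.ofReal_le_ofReal
        have h1 : variance (∑ i, Y i) ℙ / cc ^ 2 ≤ (n*p) / cc ^ 2 :=
          div_le_div_of_nonneg_right hVar (by positivity) |>.trans_eq rfl
        have h2 : (n*p/2)^2 ≤ cc^2 := by
          apply pow_le_pow_left₀ (by linarith) (by rw [hcc]; linarith)
        have h3 : (n*p) / cc^2 ≤ (n*p) / (n*p/2)^2 :=
          div_le_div_of_nonneg_left (by linarith) (by positivity) h2
        have h4 : (n*p) / (n*p/2)^2 = 4 / (n*p) := by
          field_simp
          ring
        linarith

/-! ### asymptotics helper -/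

lemma badBound_eq {b B : ℝ} (hb : 0 < b) {m : ℕ} (hm : 1 ≤ m) {x : ℝ} (hx : 1 ≤ x) :
    x^2 * B / (b * x ^ ((2:ℝ)/m) / 2)^(m+1)
      = (B / (b/2)^(m+1)) * x ^ (-((2:ℝ)/m)) := by
  have hx0 : (0:ℝ) < x := lt_of_lt_of_le one_pos hx
  have hm0 : (m:ℝ) ≠ 0 := Nat.cast_ne_zero.mpr (by omega)
  set e : ℝ := (2:ℝ)/m with he
  have h1 : (b * x ^ e / 2)^(m+1) = (b/2)^(m+1) * x ^ (e * ((m:ℝ)+1)) := by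
    rw [show b * x ^ e / 2 = (b/2) * x ^ e by ring, mul_pow]
    congr 1
    rw [← Real.rpow_natCast (x ^ e) (m+1), ← Real.rpow_mul hx0.le]
    congr 1
    push_cast
    ring
  have h3 : x ^ 2 = x ^ (-e) * x ^ (e * ((m:ℝ)+1)) := by
    rw [← Real.rpow_natCast x 2, ← Real.rpow_add hx0]
    congr 1
    rw [he]
    field_simp
    ring
  have h4 : ((b/2):ℝ)^(m+1) ≠ 0 := by positivity
  have h5 : x ^ (e * ((m:ℝ)+1)) ≠ 0 := (Real.rpow_pos_of_pos hx0 _).ne'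
  rw [h1, h3]
  field_simp

theorem ripsDeath_not_admissible {m : ℕ} (hm : 3 ≤ m) {c : ℝ} (hc : 0 < c)
    (hprob : IsProbabilityMeasure (heavyMeasure m c))
    {Ω : Type*} [MeasureSpace Ω] [IsProbabilityMeasure (ℙ : Measure Ω)]
    (X : ℕ → Ω → EuclideanSpace ℝ (Fin m)) (hmeas : ∀ i, Measurable (X i))
    (hindep : iIndepFun X ℙ)
    (hlaw : ∀ i, Measure.map (X i) ℙ = heavyMeasure m c) :
    (∀ᶠ n : ℕ in atTop,
      (1 : ℝ) / 4 ≤ (ℙ {ω | 1 < ripsDeath (fun i : Fin n => X i ω)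
        (n - ⌈(n : ℝ) ^ (1 - (2 : ℝ) / m) / 4⌉₊)}).toReal) ∧
    ¬ TendstoInMeasure ℙ (fun n ω => ripsDeath (fun i : Fin n => X i ω)
        (n - ⌈(n : ℝ) ^ (1 - (2 : ℝ) / m) / 4⌉₊)) atTop (fun _ => (0 : ℝ)) := by
  have hm1 : 1 ≤ m := by omega
  have hmR : (0:ℝ) < m := by exact_mod_cast (by omega : 0 < m)
  set μ := heavyMeasure m c with hμdef
  set b := tailC m c with hbdef
  have hbpos : 0 < b := tailC_pos hm1 hc
  set B := ballC m c with hBdef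
  have hBpos : 0 < B := ballC_pos hm1 hc
  set e : ℝ := 2 / (m:ℝ) with he
  have hepos : 0 < e := by rw [he]; positivity
  have hα : (0:ℝ) < 1 - e := by
    rw [he]
    have h3 : (3:ℝ) ≤ m := by exact_mod_cast hm
    have : (2:ℝ)/m ≤ 2/3 := by
      apply div_le_div_of_nonneg_left (by norm_num) (by norm_num) h3
    linarith
  -- Main eventual bound
  have hmain : ∀ᶠ n : ℕ in atTop,
      (1 : ℝ) / 4 ≤ (ℙ {ω | 1 < ripsDeath (fun i : Fin n => X i ω)
        (n - ⌈(n : ℝ) ^ (1 - e) / 4⌉₊)}).toReal := by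
    have hTt : Tendsto (fun n : ℕ => b * (n:ℝ) ^ e) atTop atTop :=
      ((tendsto_rpow_atTop hepos).comp tendsto_natCast_atTop_atTop).const_mul_atTop hbpos
    have hE1 : ∀ᶠ n : ℕ in atTop, (4:ℝ) ≤ b * (n:ℝ) ^ e := hTt.eventually_ge_atTop 4
    have hMt : Tendsto (fun n : ℕ => (n:ℝ) ^ (1 - e)) atTop atTop :=
      (tendsto_rpow_atTop hα).comp tendsto_natCast_atTop_atTop
    have hE2 : ∀ᶠ n : ℕ in atTop, (32:ℝ) ≤ (n:ℝ) ^ (1 - e) := hMt.eventually_ge_atTop 32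
    have hE4 : ∀ᶠ n : ℕ in atTop, (n:ℝ)^2 * B / (b * (n:ℝ)^e / 2)^(m+1) < 1/8 := by
      have h0 : Tendsto (fun n : ℕ => (B/(b/2)^(m+1)) * (n:ℝ) ^ (-e)) atTop (𝓝 0) := by
        simpa using ((tendsto_rpow_neg_atTop hepos).comp
          tendsto_natCast_atTop_atTop).const_mul (B/(b/2)^(m+1))
      have heq : (fun n : ℕ => (B/(b/2)^(m+1)) * (n:ℝ) ^ (-e)) =ᶠ[atTop]
          (fun n : ℕ => (n:ℝ)^2 * B / (b * (n:ℝ)^e / 2)^(m+1)) := by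
        filter_upwards [eventually_ge_atTop 1] with n hn
        have hx : (1:ℝ) ≤ n := by exact_mod_cast hn
        rw [he]
        exact (badBound_eq hbpos hm1 hx).symm
      exact (h0.congr' heq).eventually_lt_const (by norm_num)
    filter_upwards [hE1, hE2, hE4, eventually_ge_atTop 1] with n h4t h32 hbad hn1
    have hnR : (1:ℝ) ≤ n := by exact_mod_cast hn1
    have hnR0 : (0:ℝ) < n := by linarith
    set t := b * (n:ℝ) ^ e with htdef
    have ht4 : (4:ℝ) ≤ t := h4t
    have ht3 : (3:ℝ) ≤ t := by linarith
    have ht1 : (1:ℝ) ≤ t := by linarith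
    have ht0 : (0:ℝ) < t := by linarith
    set M := (n:ℝ) ^ (1 - e) with hMdef
    have hMpos : (0:ℝ) < M := by linarith
    set k := ⌈M / 4⌉₊ with hkdef
    have hk1 : 1 ≤ k := Nat.one_le_ceil_iff.mpr (by positivity)
    have hkM : (k:ℝ) ≤ M/2 := by
      have h := Nat.ceil_lt_add_one (show (0:ℝ) ≤ M/4 by linarith)
      have : (k:ℝ) < M/4 + 1 := h
      linarith
    set T : Set (EuclideanSpace ℝ (Fin m)) := {x | t < ‖x‖} with hTdef
    have hTmeas : MeasurableSet T :=
      measurableSet_lt measurable_const continuous_norm.measurable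
    set p := (μ T).toReal with hpdef
    have hple : p ≤ 1 := by
      rw [hpdef]
      calc (μ T).toReal ≤ (1 : ℝ≥0∞).toReal :=
          ENNReal.toReal_mono ENNReal.one_ne_top prob_le_one
        _ = 1 := by simp
    have hplb : b / t ≤ p := by
      have h := heavy_tail_lb hm1 hc (t := t) ht1
      have h2 := ENNReal.toReal_mono (measure_ne_top μ T) h
      rwa [ENNReal.toReal_ofReal (by positivity)] at h2
    have hbt : b / t = (n:ℝ) ^ (-e) := by
      rw [htdef, Real.rpow_neg hnR0.le]
      field_simp
    have hnp : M ≤ n * p := by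
      have h1 : M = n * (n:ℝ) ^ (-e) := by
        rw [hMdef, sub_eq_add_neg, Real.rpow_add hnR0, Real.rpow_one]
      rw [h1]
      exact mul_le_mul_of_nonneg_left (hbt ▸ hplb) hnR0.le
    have hnppos : (0:ℝ) < n * p := lt_of_lt_of_le hMpos hnp
    have hkle : (k:ℝ) ≤ n * p / 2 := by linarith
    have hkn : k ≤ n := by
      have hp2 : n * p ≤ n := by
        calc (n:ℝ) * p ≤ n * 1 := mul_le_mul_of_nonneg_left hple hnR0.le
          _ = n := mul_one _
      have : (k:ℝ) ≤ (n:ℝ) := by linarith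
      exact_mod_cast this
    -- the indicator variables
    set Y : Fin n → Ω → ℝ := fun i ω => if t < ‖X i ω‖ then 1 else 0 with hYdef
    have hmeasY : ∀ i : Fin n, Measurable (Y i) := by
      intro i
      exact Measurable.ite ((hmeas (i:ℕ)) hTmeas) measurable_const measurable_const
    have h01 : ∀ (i : Fin n) ω, Y i ω = 0 ∨ Y i ω = 1 := by
      intro i ω
      by_cases h : t < ‖X (i:ℕ) ω‖ <;> simp [hYdef, h]
    have hYint : ∀ i : Fin n, ∫ ω, Y i ω ∂ℙ = p := by
      intro i
      have hindic : Y i = (X (i:ℕ) ⁻¹' T).indicator (fun _ => (1:ℝ)) := by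
        funext ω
        by_cases h : ω ∈ X (i:ℕ) ⁻¹' T
        · rw [Set.indicator_of_mem h]; exact if_pos h
        · rw [Set.indicator_of_notMem h]; exact if_neg h
      have hmap : ℙ (X (i:ℕ) ⁻¹' T) = μ T := by
        rw [← Measure.map_apply (hmeas (i:ℕ)) hTmeas, hlaw (i:ℕ)]
      rw [hindic, integral_indicator_const _ ((hmeas (i:ℕ)) hTmeas), measureReal_def, hmap]
      simp [hpdef]
    have hindY : Set.Pairwise ↑(Finset.univ : Finset (Fin n))
        fun i j => IndepFun (Y i) (Y j) ℙ := by
      intro i _ j _ hij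
      have hg : Measurable (fun x : EuclideanSpace ℝ (Fin m) => if t < ‖x‖ then (1:ℝ) else 0) :=
        Measurable.ite hTmeas measurable_const measurable_const
      have hXij : IndepFun (X (i:ℕ)) (X (j:ℕ)) ℙ :=
        hindep.indepFun (fun h => hij (Fin.val_injective h))
      exact hXij.comp hg hg
    -- event A: few far points
    set A := {ω | ∑ i : Fin n, Y i ω ≤ (k:ℝ)} with hAdef
    have hmeasA : MeasurableSet A :=
      measurableSet_le (Finset.measurable_sum _ fun i _ => hmeasY i) measurable_const
    have hPA : ℙ A ≤ ENNReal.ofReal (1/8) := by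
      calc ℙ A ≤ ENNReal.ofReal (4 / (n * p)) :=
            count_tail Y hmeasY hindY h01 hYint hkle hnppos
        _ ≤ ENNReal.ofReal (1/8) := by
            apply ENNReal.ofReal_le_ofReal
            have h1 : 4/(n*p) ≤ 4/M := div_le_div_of_nonneg_left (by norm_num) hMpos hnp
            have h2 : 4/M ≤ 1/8 := by
              rw [div_le_div_iff₀ hMpos (by norm_num)]
              linarith
            linarith
    -- event Bev: some far point has a 2-close neighbour
    set Bev := ⋃ i : Fin n, ⋃ j : Fin n,
      {ω | i ≠ j ∧ t < ‖X (i:ℕ) ω‖ ∧ dist (X (i:ℕ) ω) (X (j:ℕ) ω) ≤ 2} with hBevdef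
    have hBsetmeas : ∀ i j : Fin n, MeasurableSet
        {ω | i ≠ j ∧ t < ‖X (i:ℕ) ω‖ ∧ dist (X (i:ℕ) ω) (X (j:ℕ) ω) ≤ 2} := by
      intro i j
      by_cases hij : i = j
      · have : {ω | i ≠ j ∧ t < ‖X (i:ℕ) ω‖ ∧ dist (X (i:ℕ) ω) (X (j:ℕ) ω) ≤ 2} = ∅ := by
          ext ω; simp [hij]
        rw [this]; exact MeasurableSet.empty
      · have : {ω | i ≠ j ∧ t < ‖X (i:ℕ) ω‖ ∧ dist (X (i:ℕ) ω) (X (j:ℕ) ω) ≤ 2}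
            = {ω | t < ‖X (i:ℕ) ω‖} ∩ {ω | dist (X (i:ℕ) ω) (X (j:ℕ) ω) ≤ 2} := by
          ext ω; simp [hij]
        rw [this]
        exact (measurableSet_lt measurable_const (hmeas (i:ℕ)).norm).inter
          (measurableSet_le ((hmeas (i:ℕ)).dist (hmeas (j:ℕ))) measurable_const)
    have hmeasBev : MeasurableSet Bev :=
      MeasurableSet.iUnion fun i => MeasurableSet.iUnion fun j => hBsetmeas i j
    have hPpair : ∀ i j : Fin n,
        ℙ {ω | i ≠ j ∧ t < ‖X (i:ℕ) ω‖ ∧ dist (X (i:ℕ) ω) (X (j:ℕ) ω) ≤ 2}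
          ≤ ENNReal.ofReal (B / (t-2)^(m+1)) := by
      intro i j
      by_cases hij : i = j
      · have : {ω | i ≠ j ∧ t < ‖X (i:ℕ) ω‖ ∧ dist (X (i:ℕ) ω) (X (j:ℕ) ω) ≤ 2} = ∅ := by
          ext ω; simp [hij]
        rw [this]; simp
      · have hpre : {ω | i ≠ j ∧ t < ‖X (i:ℕ) ω‖ ∧ dist (X (i:ℕ) ω) (X (j:ℕ) ω) ≤ 2}
            = (fun ω => (X (i:ℕ) ω, X (j:ℕ) ω)) ⁻¹'
              {q : EuclideanSpace ℝ (Fin m) × EuclideanSpace ℝ (Fin m) |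
                t < ‖q.1‖ ∧ dist q.1 q.2 ≤ 2} := by
          ext ω; simp [hij]
        have hXij : IndepFun (X (i:ℕ)) (X (j:ℕ)) ℙ :=
          hindep.indepFun (fun h => hij (Fin.val_injective h))
        have hmapeq : Measure.map (fun ω => (X (i:ℕ) ω, X (j:ℕ) ω)) ℙ = μ.prod μ := by
          rw [(indepFun_iff_map_prod_eq_prod_map_map (hmeas (i:ℕ)).aemeasurable
            (hmeas (j:ℕ)).aemeasurable).mp hXij, hlaw (i:ℕ), hlaw (j:ℕ)]
        rw [hpre, ← Measure.map_apply ((hmeas (i:ℕ)).prodMk (hmeas (j:ℕ))) (pairSet_meas m t),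
          hmapeq]
        exact heavy_pair_ub hm1 hc hprob ht3
    have hPB : ℙ Bev ≤ ENNReal.ofReal (1/8) := by
      have hsum : ℙ Bev ≤ (n : ℝ≥0∞) * ((n : ℝ≥0∞) * ENNReal.ofReal (B / (t-2)^(m+1))) := by
        calc ℙ Bev ≤ ∑' i : Fin n, ℙ (⋃ j : Fin n,
              {ω | i ≠ j ∧ t < ‖X (i:ℕ) ω‖ ∧ dist (X (i:ℕ) ω) (X (j:ℕ) ω) ≤ 2}) :=
            measure_iUnion_le _
          _ ≤ ∑' i : Fin n, ∑' j : Fin n,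
              ℙ {ω | i ≠ j ∧ t < ‖X (i:ℕ) ω‖ ∧ dist (X (i:ℕ) ω) (X (j:ℕ) ω) ≤ 2} :=
            ENNReal.tsum_le_tsum fun i => measure_iUnion_le _
          _ ≤ ∑' _i : Fin n, ∑' _j : Fin n, ENNReal.ofReal (B / (t-2)^(m+1)) :=
            ENNReal.tsum_le_tsum fun i => ENNReal.tsum_le_tsum fun j => hPpair i j
          _ = (n : ℝ≥0∞) * ((n : ℝ≥0∞) * ENNReal.ofReal (B / (t-2)^(m+1))) := by
            simp [tsum_fintype, Finset.sum_const, nsmul_eq_mul]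
      refine le_trans hsum ?_
      have hofn : (n : ℝ≥0∞) = ENNReal.ofReal (n:ℝ) := by
        rw [ENNReal.ofReal_natCast]
      rw [hofn, ← ENNReal.ofReal_mul (by positivity), ← ENNReal.ofReal_mul (by positivity)]
      apply ENNReal.ofReal_le_ofReal
      have htd : t/2 ≤ t - 2 := by linarith
      have hd1 : (0:ℝ) < (t/2)^(m+1) := by positivity
      have hd2 : (t/2)^(m+1) ≤ (t-2)^(m+1) := pow_le_pow_left₀ (by linarith) htd _
      have h1 : B / (t-2)^(m+1) ≤ B / (t/2)^(m+1) :=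
        div_le_div_of_nonneg_left hBpos.le hd1 hd2
      have h2 : (n:ℝ) * ((n:ℝ) * (B / (t-2)^(m+1))) ≤ (n:ℝ) * ((n:ℝ) * (B / (t/2)^(m+1))) :=
        mul_le_mul_of_nonneg_left (mul_le_mul_of_nonneg_left h1 hnR0.le) hnR0.le
      have h3 : (n:ℝ) * ((n:ℝ) * (B / (t/2)^(m+1))) = (n:ℝ)^2 * B / (t/2)^(m+1) := by ring
      linarith
    -- inclusion of the good event
    have hincl : (A ∪ Bev)ᶜ ⊆ {ω | 1 < ripsDeath (fun i : Fin n => X (i:ℕ) ω) (n - k)} := by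
      intro ω hω
      rw [Set.mem_compl_iff, Set.mem_union] at hω
      push_neg at hω
      obtain ⟨hA', hB'⟩ := hω
      classical
      set I := Finset.univ.filter (fun i : Fin n => t < ‖X (i:ℕ) ω‖) with hIdef
      have hsum : ∑ i : Fin n, Y i ω = (I.card : ℝ) := by
        rw [hIdef, hYdef]
        rw [Finset.card_filter]
        push_cast
        apply Finset.sum_congr rfl
        intro i _
        by_cases h : t < ‖X (i:ℕ) ω‖ <;> simp [h]
      have hcard : k < I.card := by
        have h1 : ¬ (∑ i : Fin n, Y i ω ≤ (k:ℝ)) := hA'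
        rw [hsum] at h1
        have : (k:ℝ) < (I.card : ℝ) := not_le.mp h1
        exact_mod_cast this
      have hnotB : ∀ i j : Fin n,
          ¬ (i ≠ j ∧ t < ‖X (i:ℕ) ω‖ ∧ dist (X (i:ℕ) ω) (X (j:ℕ) ω) ≤ 2) := by
        intro i j hij
        apply hB'
        rw [hBevdef]
        exact Set.mem_iUnion.mpr ⟨i, Set.mem_iUnion.mpr ⟨j, hij⟩⟩
      have hiso : ∀ i ∈ I, ∀ j, j ≠ i →
          2 ≤ dist ((fun i : Fin n => X (i:ℕ) ω) i) ((fun i : Fin n => X (i:ℕ) ω) j) := by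
        intro i hi j hj
        have hfar : t < ‖X (i:ℕ) ω‖ := by
          rw [hIdef] at hi
          exact (Finset.mem_filter.mp hi).2
        by_contra hlt
        push_neg at hlt
        exact hnotB i j ⟨hj.symm, hfar, hlt.le⟩
      exact one_lt_ripsDeath _ hk1 hkn I hcard hiso
    -- final probability computation
    have hU : ℙ (A ∪ Bev) ≤ ENNReal.ofReal (1/4) := by
      calc ℙ (A ∪ Bev) ≤ ℙ A + ℙ Bev := measure_union_le _ _
        _ ≤ ENNReal.ofReal (1/8) + ENNReal.ofReal (1/8) := add_le_add hPA hPB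
        _ = ENNReal.ofReal (1/4) := by
          rw [← ENNReal.ofReal_add (by norm_num) (by norm_num)]
          norm_num
    have hS : ENNReal.ofReal (3/4) ≤
        ℙ {ω | 1 < ripsDeath (fun i : Fin n => X (i:ℕ) ω) (n - k)} := by
      calc ENNReal.ofReal (3/4) = 1 - ENNReal.ofReal (1/4) := by
            rw [show (3/4:ℝ) = 1 - 1/4 by norm_num,
              ENNReal.ofReal_sub _ (by norm_num), ENNReal.ofReal_one]
        _ ≤ 1 - ℙ (A ∪ Bev) := tsub_le_tsub_left hU 1
        _ = ℙ ((A ∪ Bev)ᶜ) := (prob_compl_eq_one_sub (hmeasA.union hmeasBev)).symm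
        _ ≤ _ := measure_mono hincl
    have hfin := ENNReal.toReal_mono (measure_ne_top ℙ _) hS
    rw [ENNReal.toReal_ofReal (by norm_num)] at hfin
    linarith
  refine ⟨hmain, ?_⟩
  intro hTIM
  have h1 := hTIM 1 one_pos
  have h2 : ∀ᶠ n : ℕ in atTop, ENNReal.ofReal (1/4) ≤
      ℙ {ω | 1 ≤ dist (ripsDeath (fun i : Fin n => X (i:ℕ) ω)
        (n - ⌈(n : ℝ) ^ (1 - e) / 4⌉₊)) 0} := by
    filter_upwards [hmain] with n hn
    have hsub : {ω | 1 < ripsDeath (fun i : Fin n => X (i:ℕ) ω)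
        (n - ⌈(n : ℝ) ^ (1 - e) / 4⌉₊)} ⊆
        {ω | 1 ≤ dist (ripsDeath (fun i : Fin n => X (i:ℕ) ω)
          (n - ⌈(n : ℝ) ^ (1 - e) / 4⌉₊)) 0} := by
      intro ω hω
      simp only [Set.mem_setOf_eq] at hω ⊢
      rw [Real.dist_eq, sub_zero]
      calc (1:ℝ) ≤ ripsDeath (fun i : Fin n => X (i:ℕ) ω)
            (n - ⌈(n : ℝ) ^ (1 - e) / 4⌉₊) := hω.le
        _ ≤ |ripsDeath (fun i : Fin n => X (i:ℕ) ω)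
            (n - ⌈(n : ℝ) ^ (1 - e) / 4⌉₊)| := le_abs_self _
    calc ENNReal.ofReal (1/4) ≤
        ℙ {ω | 1 < ripsDeath (fun i : Fin n => X (i:ℕ) ω)
          (n - ⌈(n : ℝ) ^ (1 - e) / 4⌉₊)} := ENNReal.ofReal_le_of_le_toReal hn
      _ ≤ _ := measure_mono hsub
  have h3 : ∀ᶠ n : ℕ in atTop,
      ℙ {ω | 1 ≤ dist (ripsDeath (fun i : Fin n => X (i:ℕ) ω)
        (n - ⌈(n : ℝ) ^ (1 - e) / 4⌉₊)) 0} < ENNReal.ofReal (1/4) :=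
    by
      refine (h1.eventually_lt_const (ENNReal.ofReal_pos.mpr (by norm_num : (0:ℝ) < 1/4))).mono fun n hn => ?_
      convert hn using 2
      ext ω
      simp only [Set.mem_setOf_eq, edist_dist, ENNReal.one_le_ofReal]
  obtain ⟨n, hn2, hn3⟩ := (h2.and h3).exists
  exact absurd (lt_of_le_of_lt hn2 hn3) (lt_irrefl _)
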